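/- Let A be a C*-algebra and ω a bounded linear functional on A with polar decomposition ω = u.|ω|_r in A** (u a partial isometry with u*u the support of |ω|_r). Define |ω|_l = u.|ω|_r.u*. Then |ω|_l is a positive functional with ‖|ω|_l‖ = ‖ω‖, ω = |ω|_l.u, and |ω|_l = ω.u*. -/
import Mathlib


open scoped ComplexOrder

/-- Polar decomposition of a functional. Let `φ = |ω|_r` be a
positive functional on a (unital) C*-algebra `M` (playing the role of `A**`),
and `u` a partial isometry such that `u*u` acts as the support of `φ` (a unit
for `φ`). Put `ω := φ(· u)` (i.e. `ω = u.|ω|_r`) and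
`ωl := φ(u* · u)` (i.e. `|ω|_l = u.|ω|_r.u*`). Then `|ω|_l` is positive with
`‖|ω|_l‖ = ‖ω‖`, `ω = |ω|_l.u` (i.e. `ω(x) = |ω|_l(ux)`) and `|ω|_l = ω.u*`
(i.e. `|ω|_l(x) = ω(u* x)`). -/
theorem stmt17 {M : Type*} [NormedRing M] [StarRing M] [CStarRing M]
    [NormedAlgebra ℂ M] [CompleteSpace M] [StarModule ℂ M]
    (φ : M →L[ℂ] ℂ) (hpos : ∀ a : M, 0 ≤ φ (star a * a))
    (u : M) (hpi : u * star u * u = u)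
    (hsupp : ∀ x : M, φ (star u * u * x) = φ x ∧ φ (x * (star u * u)) = φ x) :
    ∀ (ω ωl : M →L[ℂ] ℂ),
      ω = φ.comp ((ContinuousLinearMap.mul ℂ M).flip u) →
      ωl = φ.comp (((ContinuousLinearMap.mul ℂ M).flip u).comp
        ((ContinuousLinearMap.mul ℂ M) (star u))) →
      (∀ a : M, 0 ≤ ωl (star a * a)) ∧ ‖ωl‖ = ‖ω‖ ∧
      (∀ x : M, ω x = ωl (u * x)) ∧ (∀ x : M, ωl x = ω (star u * x)) := by

  intro ω ωl hω hωl
  have hωx : ∀ x : M, ω x = φ (x * u) := fun x => by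
    simp [hω]
  have hωlx : ∀ x : M, ωl x = φ (star u * x * u) := fun x => by
    simp [hωl, mul_assoc]
  have h3 : ∀ x : M, ω x = ωl (u * x) := by
    intro x
    rw [hωx, hωlx]
    have : star u * (u * x) * u = star u * u * (x * u) := by
      simp [mul_assoc]
    rw [this, (hsupp (x * u)).1]
  have h4 : ∀ x : M, ωl x = ω (star u * x) := by
    intro x
    rw [hωx, hωlx, mul_assoc]
  have h1 : ∀ a : M, 0 ≤ ωl (star a * a) := by
    intro a
    rw [hωlx]
    have : star u * (star a * a) * u = star (a * u) * (a * u) := by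
      simp [star_mul, mul_assoc]
    rw [this]
    exact hpos _
  have hp : ‖star u * u‖ ≤ 1 := by
    have hpp : (star u * u) * (star u * u) = star u * u := by
      have : u * star u * u = u := hpi
      calc (star u * u) * (star u * u) = star u * (u * star u * u) := by
            simp [mul_assoc]
        _ = star u * u := by rw [this]
    have h := CStarRing.norm_star_mul_self (x := star u * u)
    rw [star_mul, star_star] at h
    have : star u * (u * (star u * u)) = star u * u := by
      rw [← mul_assoc, ← mul_assoc]
      simpa [mul_assoc] using hpp
    rw [show star u * u * (star u * u) = star u * u from by
      simpa [mul_assoc] using hpp] at h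
    nlinarith [norm_nonneg (star u * u)]
  have hu : ‖u‖ ≤ 1 := by
    have h := CStarRing.norm_star_mul_self (x := u)
    nlinarith [norm_nonneg u]
  have hsu : ‖star u‖ ≤ 1 := by rwa [norm_star]
  have h2 : ‖ωl‖ = ‖ω‖ := by
    apply le_antisymm
    · apply ContinuousLinearMap.opNorm_le_bound _ (norm_nonneg ω)
      intro x
      rw [h4 x]
      calc ‖ω (star u * x)‖ ≤ ‖ω‖ * ‖star u * x‖ := ω.le_opNorm _
        _ ≤ ‖ω‖ * (‖star u‖ * ‖x‖) := by
            gcongr; exact norm_mul_le _ _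
        _ ≤ ‖ω‖ * (1 * ‖x‖) := by gcongr
        _ = ‖ω‖ * ‖x‖ := by ring
    · apply ContinuousLinearMap.opNorm_le_bound _ (norm_nonneg ωl)
      intro x
      rw [h3 x]
      calc ‖ωl (u * x)‖ ≤ ‖ωl‖ * ‖u * x‖ := ωl.le_opNorm _
        _ ≤ ‖ωl‖ * (‖u‖ * ‖x‖) := by
            gcongr; exact norm_mul_le _ _
        _ ≤ ‖ωl‖ * (1 * ‖x‖) := by gcongr
        _ = ‖ωl‖ * ‖x‖ := by ring
  exact ⟨h1, h2, h3, h4⟩
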